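/- arXiv:2407.21208 — 2 statements merged into one kernel-verified Lean document; each statement's English description precedes it below -/
import Mathlib

section
/- Let $p$ be a prime with $p \equiv 1 \pmod 4$. Then the congruence $x^4 \equiv 2 \pmod p$ has an integer solution if and only if there exist natural numbers $x, y$ with $p = x^2 + 64y^2$. -/
lemma sign_lemma (t c s : ℕ) (h : 8 * s + 1 = (2 * t + 1) ^ 2 + (4 * c) ^ 2) :
    ZMod.χ₈ ((2 * t + 1 + 4 * c : ℕ) : ZMod 8) * (-1 : ℤ) ^ s = (-1) ^ c := by
  rw [ZMod.χ₈_nat_mod_eight]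
  rcases Nat.even_or_odd t with ⟨v, hv⟩ | ⟨v, hv⟩ <;>
    rcases Nat.even_or_odd v with ⟨w, hw⟩ | ⟨w, hw⟩ <;>
    rcases Nat.even_or_odd c with ⟨d, hd⟩ | ⟨d, hd⟩ <;>
    subst hv hw hd
  -- 1: t = 4w, c even
  · have hs : Even s := ⟨4*w^2 + w + 4*d^2, by nlinarith [h]⟩
    rw [show (2*((w+w)+(w+w))+1+4*(d+d)) % 8 = 1 by omega]
    rw [show ZMod.χ₈ ((1:ℕ) : ZMod 8) = 1 by decide, hs.neg_one_pow,
      (Even.add_self d).neg_one_pow]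
    norm_num
  -- 2: t = 4w, c odd
  · have hs : Even s := ⟨4*w^2 + w + 4*d^2 + 4*d + 1, by nlinarith [h]⟩
    rw [show (2*((w+w)+(w+w))+1+4*(2*d+1)) % 8 = 5 by omega]
    rw [show ZMod.χ₈ ((5:ℕ) : ZMod 8) = -1 by decide, hs.neg_one_pow,
      (odd_two_mul_add_one d).neg_one_pow]
    norm_num
  -- 3: t = 4w+2, c even
  · have hs : Odd s := ⟨4*w^2 + 5*w + 1 + 4*d^2, by nlinarith [h]⟩
    rw [show (2*((2*w+1)+(2*w+1))+1+4*(d+d)) % 8 = 5 by omega]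
    rw [show ZMod.χ₈ ((5:ℕ) : ZMod 8) = -1 by decide, hs.neg_one_pow,
      (Even.add_self d).neg_one_pow]
    norm_num
  -- 4: t = 4w+2, c odd
  · have hs : Odd s := ⟨4*w^2 + 5*w + 4*d^2 + 4*d + 2, by nlinarith [h]⟩
    rw [show (2*((2*w+1)+(2*w+1))+1+4*(2*d+1)) % 8 = 1 by omega]
    rw [show ZMod.χ₈ ((1:ℕ) : ZMod 8) = 1 by decide, hs.neg_one_pow,
      (odd_two_mul_add_one d).neg_one_pow]
    norm_num
  -- 5: t = 4w+1, c even
  · have hs : Odd s := ⟨4*w^2 + 3*w + 4*d^2, by nlinarith [h]⟩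
    rw [show (2*(2*(w+w)+1)+1+4*(d+d)) % 8 = 3 by omega]
    rw [show ZMod.χ₈ ((3:ℕ) : ZMod 8) = -1 by decide, hs.neg_one_pow,
      (Even.add_self d).neg_one_pow]
    norm_num
  -- 6: t = 4w+1, c odd
  · have hs : Odd s := ⟨4*w^2 + 3*w + 4*d^2 + 4*d + 1, by nlinarith [h]⟩
    rw [show (2*(2*(w+w)+1)+1+4*(2*d+1)) % 8 = 7 by omega]
    rw [show ZMod.χ₈ ((7:ℕ) : ZMod 8) = 1 by decide, hs.neg_one_pow,
      (odd_two_mul_add_one d).neg_one_pow]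
    norm_num
  -- 7: t = 4w+3, c even
  · have hs : Even s := ⟨4*w^2 + 7*w + 3 + 4*d^2, by nlinarith [h]⟩
    rw [show (2*(2*(2*w+1)+1)+1+4*(d+d)) % 8 = 7 by omega]
    rw [show ZMod.χ₈ ((7:ℕ) : ZMod 8) = 1 by decide, hs.neg_one_pow,
      (Even.add_self d).neg_one_pow]
    norm_num
  -- 8: t = 4w+3, c odd
  · have hs : Even s := ⟨4*w^2 + 7*w + 4 + 4*d^2 + 4*d, by nlinarith [h]⟩
    rw [show (2*(2*(2*w+1)+1)+1+4*(2*d+1)) % 8 = 3 by omega]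
    rw [show ZMod.χ₈ ((3:ℕ) : ZMod 8) = -1 by decide, hs.neg_one_pow,
      (odd_two_mul_add_one d).neg_one_pow]
    norm_num


lemma pow4_crit (p : ℕ) [Fact p.Prime] (h1 : p % 4 = 1) {a : ZMod p} (ha : a ≠ 0) :
    (∃ x : ZMod p, x ^ 4 = a) ↔ a ^ ((p - 1) / 4) = 1 := by
  have hp := (Fact.out : p.Prime)
  have hp5 : 5 ≤ p := by
    rcases hp.two_le.lt_or_eq with h | h
    · omega
    · omega
  have h4 : 4 ∣ p - 1 := by omega
  constructor
  · rintro ⟨x, rfl⟩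
    have hx : x ≠ 0 := fun h => ha (by simp [h])
    rw [← pow_mul, Nat.mul_div_cancel' h4]
    exact ZMod.pow_card_sub_one_eq_one hx
  · intro h
    obtain ⟨g, hg⟩ := IsCyclic.exists_generator (α := (ZMod p)ˣ)
    have hcard : orderOf g = p - 1 := by
      rw [orderOf_eq_card_of_forall_mem_zpowers hg, Nat.card_eq_fintype_card,
        ZMod.card_units_eq_totient, Nat.totient_prime hp]
    set u := Units.mk0 a ha with hu
    obtain ⟨k, hk'⟩ := mem_powers_iff_mem_zpowers.mpr (hg u)
    have hk : g ^ k = u := hk'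
    have hum : u ^ ((p - 1) / 4) = 1 := by
      ext
      push_cast
      exact h
    have hdvd : (p - 1) ∣ k * ((p - 1) / 4) := by
      have h2 := orderOf_dvd_of_pow_eq_one (x := g) (n := k * ((p - 1) / 4))
        (by rw [pow_mul, hk, hum])
      rwa [hcard] at h2
    have hm : 0 < (p - 1) / 4 := by omega
    have h4k : 4 ∣ k := by
      obtain ⟨j, hj⟩ := hdvd
      have : 4 * ((p - 1) / 4) ∣ k * ((p - 1) / 4) := by
        rw [Nat.mul_div_cancel' h4]; exact ⟨j, hj⟩
      exact (Nat.mul_dvd_mul_iff_right hm).mp this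
    obtain ⟨j, hj⟩ := h4k
    refine ⟨((g ^ j : (ZMod p)ˣ) : ZMod p), ?_⟩
    have : (g ^ j) ^ 4 = u := by rw [← pow_mul, mul_comm, ← hj, hk]
    calc ((g ^ j : (ZMod p)ˣ) : ZMod p) ^ 4 = (((g ^ j) ^ 4 : (ZMod p)ˣ) : ZMod p) := by push_cast; ring
    _ = a := by rw [this]; rfl

lemma dirichlet_two (p a b : ℕ) [Fact p.Prime] (ha2 : a % 2 = 1) (hb4 : 4 ∣ b)
    (hsum : p = a ^ 2 + b ^ 2) :
    (2 : ZMod p) ^ ((p - 1) / 4) = (-1 : ZMod p) ^ (b / 4) := by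
  have hp := (Fact.out : p.Prime)
  obtain ⟨c, hbc⟩ := hb4
  obtain ⟨t, hat⟩ : ∃ t, a = 2 * t + 1 := ⟨a / 2, by omega⟩
  -- p % 8 = 1
  obtain ⟨w, hw⟩ := Nat.even_mul_succ_self t
  have hexp : p = 1 + 8 * (w + 2 * c ^ 2) := by
    have h2 : (2 * t + 1) ^ 2 + (4 * c) ^ 2 = 1 + 4 * (t * (t + 1)) + 16 * c ^ 2 := by ring
    rw [hsum, hat, hbc, h2, hw]; ring
  have hp8 : p % 8 = 1 := by rw [hexp, Nat.add_mul_mod_self_left]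
  have hp1 : 1 < p := hp.one_lt
  have hb0 : b ≠ 0 := by
    rintro h0
    have hdvd : a ∣ p := ⟨a, by rw [hsum, h0]; ring⟩
    rcases hp.eq_one_or_self_of_dvd a hdvd with h | h
    · rw [hsum, h, h0] at hp1; simp at hp1
    · rw [hsum, h0] at h; nlinarith [hp.two_le]
  have hc0 : 0 < c := by omega
  have ha0 : 0 < a := by omega
  have hap : a < p := by nlinarith [hsum]
  have hbp : b < p := by nlinarith [hsum]
  have hA : (a : ZMod p) ≠ 0 := by
    rw [Ne, ZMod.natCast_eq_zero_iff]
    intro hdvd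
    have := Nat.le_of_dvd ha0 hdvd
    omega
  have hB : (b : ZMod p) ≠ 0 := by
    rw [Ne, ZMod.natCast_eq_zero_iff]
    intro hdvd
    have := Nat.le_of_dvd (by omega) hdvd
    omega
  have hgcd : Nat.gcd a b = 1 := by
    by_contra hne
    have hd1 : Nat.gcd a b ∣ a := Nat.gcd_dvd_left a b
    have hd2 : Nat.gcd a b ∣ b := Nat.gcd_dvd_right a b
    have hdp : Nat.gcd a b ^ 2 ∣ p := by
      rw [hsum]; exact dvd_add (pow_dvd_pow_of_dvd hd1 2) (pow_dvd_pow_of_dvd hd2 2)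
    rcases (Nat.dvd_prime hp).mp hdp with h | h
    · exact hne ((pow_eq_one_iff_left (two_ne_zero)).mp h)
    · have hdvd : Nat.gcd a b ∣ p := ⟨Nat.gcd a b, by rw [← h]; ring⟩
      rcases hp.eq_one_or_self_of_dvd _ hdvd with h1 | h1
      · rw [h1] at h; simp at h; omega
      · rw [h1] at h; nlinarith [hp.two_le]
  have hoddab : Odd (a + b) := by rw [Nat.odd_iff]; omega
  have hp4 : p % 4 = 1 := by omega
  -- the basic relation in ZMod p
  have h0 : (a : ZMod p) ^ 2 + (b : ZMod p) ^ 2 = 0 := by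
    have h : ((a ^ 2 + b ^ 2 : ℕ) : ZMod p) = 0 := by rw [← hsum]; exact ZMod.natCast_self p
    push_cast at h; exact h
  -- Legendre symbol values
  have L1 : legendreSym p (a : ℤ) = 1 := by
    rw [jacobiSym.legendreSym.to_jacobiSym,
      jacobiSym.quadratic_reciprocity_one_mod_four' (Nat.odd_iff.mpr ha2) hp4]
    have hmod : ((p : ℕ) : ℤ) % (a : ℕ) = ((b : ℤ) ^ 2) % (a : ℕ) := by
      have h : ((p : ℕ) : ℤ) = (b : ℤ) ^ 2 + ((a : ℕ) : ℤ) * (a : ℤ) := by push_cast [hsum]; ring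
      rw [h, Int.add_mul_emod_self_left]
    rw [jacobiSym.mod_left' hmod]
    exact jacobiSym.sq_one' (by rw [Int.gcd_natCast_natCast, Nat.gcd_comm]; exact hgcd)
  have L2 : legendreSym p ((a + b : ℕ) : ℤ) = ZMod.χ₈ ((a + b : ℕ) : ZMod 8) := by
    rw [jacobiSym.legendreSym.to_jacobiSym,
      jacobiSym.quadratic_reciprocity_one_mod_four' hoddab hp4]
    have hmod : ((p : ℕ) : ℤ) % ((a + b : ℕ) : ℤ) = (2 * (b : ℤ) ^ 2) % ((a + b : ℕ) : ℤ) := by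
      have h : ((p : ℕ) : ℤ) = 2 * (b : ℤ) ^ 2 + ((a + b : ℕ) : ℤ) * ((a : ℤ) - (b : ℤ)) := by
        push_cast [hsum]; ring
      rw [h, Int.add_mul_emod_self_left]
    rw [jacobiSym.mod_left' hmod, show (2 * (b : ℤ) ^ 2) = 2 * ((b : ℤ)) ^ 2 from rfl,
      jacobiSym.mul_left, jacobiSym.sq_one', jacobiSym.at_two hoddab, mul_one]
    rw [Int.gcd_natCast_natCast, Nat.gcd_add_self_right, Nat.gcd_comm]
    exact hgcd
  -- Euler's criterion
  have E1 : (((a : ZMod p) + b)) ^ (p / 2) = ((legendreSym p ((a + b : ℕ) : ℤ) : ℤ) : ZMod p) := by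
    rw [legendreSym.eq_pow]; push_cast; ring
  have E2 : ((a : ZMod p)) ^ (p / 2) = ((legendreSym p (a : ℤ) : ℤ) : ZMod p) := by
    rw [legendreSym.eq_pow]; push_cast; ring
  set m := (p - 1) / 4 with hm
  have hm2 : 2 * m = p / 2 := by omega
  have hs8 : m = 2 * ((p - 1) / 8) := by omega
  have key : (2 : ZMod p) * ((a : ZMod p) * b) = ((a : ZMod p) + b) ^ 2 := by
    linear_combination -h0
  have key2 : (2 : ZMod p) ^ m * ((a : ZMod p) * b) ^ m = ((a : ZMod p) + b) ^ (2 * m) := by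
    rw [pow_mul, ← mul_pow, key]
  set i := (b : ZMod p) * (a : ZMod p)⁻¹ with hi
  have hi2 : i ^ 2 = -1 := by
    rw [hi, mul_pow, show (b : ZMod p) ^ 2 = -(a : ZMod p) ^ 2 by linear_combination h0]
    field_simp
  have hiab : (a : ZMod p) * b = i * (a : ZMod p) ^ 2 := by
    rw [hi]; field_simp
  have hab_pow : ((a : ZMod p) * b) ^ m
      = (-1 : ZMod p) ^ ((p - 1) / 8) * ((legendreSym p (a : ℤ) : ℤ) : ZMod p) := by
    rw [hiab, mul_pow, ← pow_mul, hm2, E2, hs8, pow_mul, hi2]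
  have main : (2 : ZMod p) ^ m *
      ((-1 : ZMod p) ^ ((p - 1) / 8) * ((legendreSym p (a : ℤ) : ℤ) : ZMod p))
      = ((ZMod.χ₈ ((a + b : ℕ) : ZMod 8) : ℤ) : ZMod p) := by
    rw [← hab_pow, key2, hm2, E1, L2]
  rw [L1] at main
  have hx : (-1 : ZMod p) ^ ((p - 1) / 8) * (-1 : ZMod p) ^ ((p - 1) / 8) = 1 := by
    rw [← pow_add]; exact Even.neg_one_pow ⟨(p - 1) / 8, rfl⟩
  have main2 : (2 : ZMod p) ^ m
      = ((ZMod.χ₈ ((a + b : ℕ) : ZMod 8) : ℤ) : ZMod p) * (-1 : ZMod p) ^ ((p - 1) / 8) := by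
    calc (2 : ZMod p) ^ m
        = 2 ^ m * ((-1 : ZMod p) ^ ((p - 1) / 8) * (-1 : ZMod p) ^ ((p - 1) / 8)) := by
          rw [hx, mul_one]
      _ = (2 ^ m * ((-1 : ZMod p) ^ ((p - 1) / 8) * (((1 : ℤ) : ZMod p)))) *
            (-1 : ZMod p) ^ ((p - 1) / 8) := by push_cast; ring
      _ = _ := by rw [main]
  have hsign := sign_lemma t c ((p - 1) / 8) (by
    have h8 : 8 * ((p - 1) / 8) + 1 = p := by omega
    rw [h8, hsum, hat, hbc])
  have hab' : ((a + b : ℕ) : ZMod 8) = ((2 * t + 1 + 4 * c : ℕ) : ZMod 8) := by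
    rw [hat, hbc]
  rw [main2, hab']
  have hcast : ((ZMod.χ₈ ((2 * t + 1 + 4 * c : ℕ) : ZMod 8) : ℤ) : ZMod p) *
        (-1 : ZMod p) ^ ((p - 1) / 8)
      = (((ZMod.χ₈ ((2 * t + 1 + 4 * c : ℕ) : ZMod 8) * (-1 : ℤ) ^ ((p - 1) / 8) : ℤ)) :
          ZMod p) := by
    push_cast; ring
  rw [hcast, hsign, show b / 4 = c by omega]
  push_cast
  ring


theorem gauss_biquadratic_two (p : ℕ) (hp : p.Prime) (h1 : p % 4 = 1) :
    (∃ x : ℤ, x ^ 4 ≡ 2 [ZMOD p]) ↔ ∃ x y : ℕ, p = x ^ 2 + 64 * y ^ 2 := by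
  haveI : Fact p.Prime := ⟨hp⟩
  have hp2 := hp.two_le
  have hp5 : 5 ≤ p := by
    rcases Nat.lt_or_ge p 5 with h | h
    · interval_cases p <;> omega
    · exact h
  have sqpar : ∀ n : ℕ, n ^ 2 % 2 = n % 2 := by
    intro n
    rcases Nat.even_or_odd n with ⟨u, hu⟩ | ⟨u, hu⟩ <;> subst hu
    · have h : (u + u) ^ 2 = 2 * (2 * (u * u)) := by ring
      omega
    · have h : (2 * u + 1) ^ 2 = 2 * (2 * (u * u) + 2 * u) + 1 := by ring
      omega
  have h2ne : (2 : ZMod p) ≠ 0 := by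
    have h : ((2 : ℕ) : ZMod p) ≠ 0 := by
      rw [Ne, ZMod.natCast_eq_zero_iff]
      intro hd
      have := Nat.le_of_dvd (by norm_num) hd
      omega
    exact_mod_cast h
  have hiff := pow4_crit p h1 h2ne
  constructor
  · rintro ⟨x, hx⟩
    have hx' : ((x : ZMod p)) ^ 4 = 2 := by
      have h := (ZMod.intCast_eq_intCast_iff _ _ _).mpr hx
      push_cast at h
      exact h
    have hpow : (2 : ZMod p) ^ ((p - 1) / 4) = 1 := hiff.mp ⟨(x : ZMod p), hx'⟩
    have hsq : IsSquare (2 : ZMod p) := ⟨(x : ZMod p) ^ 2, by rw [← hx']; ring⟩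
    have hp8 : p % 8 = 1 := by
      rcases (ZMod.exists_sq_eq_two_iff (p := p) (by omega)).mp hsq with h | h <;> omega
    obtain ⟨A, B, hAB⟩ := Nat.Prime.sq_add_sq (p := p) (by omega)
    obtain ⟨a, b, hab, ha2⟩ : ∃ a b, p = a ^ 2 + b ^ 2 ∧ a % 2 = 1 := by
      have h1 := sqpar A
      have h2 := sqpar B
      rcases Nat.even_or_odd A with hA | hA
      · exact ⟨B, A, by omega, by rw [Nat.even_iff] at hA; omega⟩
      · exact ⟨A, B, by omega, by rw [Nat.odd_iff] at hA; exact hA⟩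
    have hb4 : 4 ∣ b := by
      obtain ⟨t, ht⟩ : ∃ t, a = 2 * t + 1 := ⟨a / 2, by omega⟩
      obtain ⟨e, he⟩ : ∃ e, b = 2 * e := by
        have h1 := sqpar a
        have h2 := sqpar b
        obtain ⟨e, he⟩ : ∃ e, b % 2 = 0 ∧ b = 2 * (b / 2) ∨ b % 2 = 1 := ⟨0, by omega⟩
        exact ⟨b / 2, by omega⟩
      obtain ⟨w, hw⟩ := Nat.even_mul_succ_self t
      have hkey : p = 8 * w + 4 * e ^ 2 + 1 := by
        have hr : (2 * t + 1) ^ 2 + (2 * e) ^ 2 = 4 * (t * (t + 1)) + 4 * e ^ 2 + 1 := by ring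
        rw [hab, ht, he, hr, hw]; ring
      have hpar := sqpar e
      omega
    have hD := dirichlet_two p a b ha2 hb4 hab
    have hbeven : (b / 4) % 2 = 0 := by
      by_contra hodd
      have hNeg : (-1 : ZMod p) ^ (b / 4) = -1 :=
        Odd.neg_one_pow (Nat.odd_iff.mpr (by omega))
      have h11 : (1 : ZMod p) = -1 := (hpow.symm.trans hD).trans hNeg
      have h20 : ((2 : ℕ) : ZMod p) = 0 := by push_cast; linear_combination h11
      exact h2ne (by exact_mod_cast h20)
    obtain ⟨y, hy⟩ : ∃ y, b = 8 * y := ⟨b / 8, by omega⟩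
    exact ⟨a, y, by rw [hab, hy]; ring⟩
  · rintro ⟨x, y, hxy⟩
    have ha2 : x % 2 = 1 := by
      have h1 := sqpar x
      have h2 : 64 * y ^ 2 = 2 * (32 * y ^ 2) := by ring
      omega
    have hsum : p = x ^ 2 + (8 * y) ^ 2 := by rw [hxy]; ring
    have hD := dirichlet_two p x (8 * y) ha2 ⟨2 * y, by ring⟩ hsum
    rw [show (8 * y) / 4 = 2 * y by omega] at hD
    have hpow : (2 : ZMod p) ^ ((p - 1) / 4) = 1 := by
      rw [hD]; exact Even.neg_one_pow (even_two_mul y)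
    obtain ⟨z, hz⟩ := hiff.mpr hpow
    refine ⟨(z.val : ℤ), (ZMod.intCast_eq_intCast_iff _ _ _).mp ?_⟩
    push_cast
    rw [ZMod.natCast_val, ZMod.cast_id, hz]
end

section
/- Let $G$ be a topological group with no small subgroups, i.e., there is an identity neighborhood $V$ containing no nontrivial subgroup. Let $U$ be a compact identity neighborhood. Then the set $K = \{\Gamma \in \mathrm{Sub}(G) : \Gamma \cap U = \{1\}\}$ is open in the Chabauty topology on the space $\mathrm{Sub}(G)$ of closed subgroups of $G$. -/
open TopologicalSpace

/-- The space of closed subgroups of a topological group `G`. -/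
def ClosedSub (G : Type*) [Group G] [TopologicalSpace G] :=
  {H : Subgroup G // IsClosed (H : Set G)}

/-- The Chabauty topology on the space of closed subgroups: generated by the sets
`{H | H ∩ K = ∅}` for `K` compact and `{H | H ∩ U ≠ ∅}` for `U` open. -/
def chabautyTopology (G : Type*) [Group G] [TopologicalSpace G] :
    TopologicalSpace (ClosedSub G) :=
  generateFrom
    ({S | ∃ K : Set G, IsCompact K ∧ S = {H : ClosedSub G | (H.1 : Set G) ∩ K = ∅}} ∪
     {S | ∃ U : Set G, IsOpen U ∧ S = {H : ClosedSub G | ((H.1 : Set G) ∩ U).Nonempty}})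

/-- If `G` has no small subgroups and `U` is a compact identity neighborhood, then
`{Γ : Γ ∩ U = {1}}` is Chabauty open. -/
theorem chabauty_open_of_nss (G : Type*) [Group G] [TopologicalSpace G]
    [IsTopologicalGroup G]
    (hNSS : ∃ V ∈ nhds (1 : G), ∀ H : Subgroup G, (H : Set G) ⊆ V → H = ⊥)
    (U : Set G) (hUc : IsCompact U) (hU : U ∈ nhds (1 : G)) :
    (chabautyTopology G).IsOpen
      {Γ : ClosedSub G | (Γ.1 : Set G) ∩ U = {1}} := by
  classical
  obtain ⟨V, hV, hVs⟩ := hNSS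
  obtain ⟨W₀, hW₀o, hW₀1, hW₀m⟩ := exists_open_nhds_one_mul_subset hU
  set Vi := interior V with hVi
  set W : Set G := W₀ ∩ W₀⁻¹ ∩ (Vi ∩ Vi⁻¹) with hWdef
  have hWo : IsOpen W := by
    refine ((hW₀o.inter hW₀o.inv).inter (isOpen_interior.inter isOpen_interior.inv))
  have hVi1 : (1 : G) ∈ Vi := mem_interior_iff_mem_nhds.2 hV
  have hW1 : (1 : G) ∈ W := by
    refine ⟨⟨hW₀1, ?_⟩, hVi1, ?_⟩ <;> simp [Set.mem_inv, hW₀1, hVi1]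
  have hWsym : ∀ x ∈ W, x⁻¹ ∈ W := by
    rintro x ⟨⟨h1, h2⟩, h3, h4⟩
    exact ⟨⟨h2, by simpa using h1⟩, h4, by simpa using h3⟩
  have hWV : W ⊆ V := fun x hx => interior_subset hx.2.1
  have hWW : ∀ a ∈ W, ∀ b ∈ W, a * b ∈ U := fun a ha b hb =>
    hW₀m (Set.mul_mem_mul ha.1.1 hb.1.1)
  have key : {Γ : ClosedSub G | (Γ.1 : Set G) ∩ U = {1}} =
      {H : ClosedSub G | (H.1 : Set G) ∩ (U \ W) = ∅} := by
    ext H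
    simp only [Set.mem_setOf_eq]
    constructor
    · intro h
      apply Set.eq_empty_iff_forall_notMem.2
      rintro x ⟨hxH, hxU, hxW⟩
      have hx1 : x ∈ ({1} : Set G) := h ▸ ⟨hxH, hxU⟩
      exact hxW (by simpa using hx1 ▸ hW1)
    · intro hdisj
      apply Set.eq_singleton_iff_unique_mem.2
      refine ⟨⟨H.1.one_mem, mem_of_mem_nhds hU⟩, ?_⟩
      rintro x ⟨hxH, hxU⟩
      by_contra hx1
      have hdisj' : ∀ y, y ∈ (H.1 : Set G) → y ∈ U → y ∈ W := by
        intro y hyH hyU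
        by_contra hyW
        exact Set.eq_empty_iff_forall_notMem.1 hdisj y ⟨hyH, hyU, hyW⟩
      have hxW : x ∈ W := hdisj' x hxH hxU
      have hex : ∃ n : ℕ, x ^ n ∉ W := by
        by_contra hall
        push_neg at hall
        have hsub : ((Subgroup.zpowers x : Subgroup G) : Set G) ⊆ V := by
          rintro y hy
          obtain ⟨m, rfl⟩ := Subgroup.mem_zpowers_iff.1 hy
          rcases Int.eq_nat_or_neg m with ⟨n, rfl | rfl⟩
          · rw [zpow_natCast]; exact hWV (hall n)
          · rw [zpow_neg, zpow_natCast]; exact hWV (hWsym _ (hall n))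
        have := hVs _ hsub
        exact hx1 (Subgroup.zpowers_eq_bot.mp this)
      have hn := Nat.find_spec hex
      set n := Nat.find hex with hndef
      have hn0 : n ≠ 0 := by
        intro h0
        apply hn
        rw [h0, pow_zero]; exact hW1
      have hn1 : n ≠ 1 := by
        intro h1
        apply hn
        rw [h1, pow_one]; exact hxW
      have hpred : x ^ (n - 1) ∈ W := by
        by_contra hc
        exact absurd (Nat.find_min' hex hc) (by omega)
      have heq : x ^ n = x ^ (n - 1) * x := by
        rw [← pow_succ]
        congr 1
        omega
      have hxnU : x ^ n ∈ U := heq ▸ hWW _ hpred _ hxW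
      exact hn (hdisj' _ (pow_mem hxH n) hxnU)
  rw [key]
  exact TopologicalSpace.GenerateOpen.basic _ (Or.inl ⟨U \ W, hUc.diff hWo, rfl⟩)
end
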